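/- For $x \in \mathbb{R}^3$ with $|x| > 8$, the integral $I(x) := \int_0^1 \int_{\mathbb{R}^3} \frac{1}{(|x-y| + \sqrt{1-s})^4} \cdot \frac{1}{(|y| + \sqrt{s})^3} \, dy \, ds$ satisfies $I(x) \le C |x|^{-3}$ for an absolute constant $C$. -/

import Mathlib

open MeasureTheory Real
noncomputable section
abbrev E3 := EuclideanSpace ℝ (Fin 3)
/-- partial derivative in direction `j` -/
def pd (j : Fin 3) (f : E3 → ℝ) (x : E3) : ℝ := fderiv ℝ f x (EuclideanSpace.single j 1)
/-- divergence of a vector field -/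
def vdiv (v : E3 → E3) (x : E3) : ℝ := ∑ j, pd j (fun y => v y j) x
/-- componentwise Laplacian (on scalars) -/
def lap (f : E3 → ℝ) (x : E3) : ℝ := ∑ j, pd j (pd j f) x
/-- curl of a vector field on ℝ³ -/
def curl (v : E3 → E3) (x : E3) : E3 :=
  WithLp.toLp 2 ![pd 1 (fun y => v y 2) x - pd 2 (fun y => v y 1) x,
    pd 2 (fun y => v y 0) x - pd 0 (fun y => v y 2) x,
    pd 0 (fun y => v y 1) x - pd 1 (fun y => v y 0) x]
/-- Gaussian heat kernel with diffusivity `c` -/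
def heatKernel (c t : ℝ) (x : E3) : ℝ :=
  (4 * Real.pi * c * t) ^ (-(3:ℝ)/2) * Real.exp (-‖x‖^2 / (4 * c * t))
/-- the weak-`L^p` quasinorm on ℝ³ -/
def wnorm3 (p : ℝ) (g : E3 → ℝ) : ℝ :=
  sSup {a : ℝ | ∃ γ : ℝ, 0 < γ ∧ a = γ * (volume {x : E3 | γ < |g x|}).toReal ^ p⁻¹}
section StmtAux
open Set Filter Topology

lemma finrank_E3 : Module.finrank ℝ E3 = 3 := by simp [finrank_euclideanSpace]

lemma radialE3 (f : ℝ → ℝ) :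
    ∫ y : E3, f ‖y‖ = 3 * (volume (Metric.ball (0:E3) 1)).toReal *
      ∫ r in Set.Ioi (0:ℝ), r ^ 2 * f r := by
  have h := MeasureTheory.integral_fun_norm_addHaar (volume : Measure E3) f
  rw [finrank_E3] at h
  simpa [nsmul_eq_mul, smul_eq_mul, mul_assoc, Measure.real] using h

lemma oneD (a : ℝ) (ha : 0 < a) :
    IntegrableOn (fun r : ℝ => r ^ 2 * ((r + a) ^ 4)⁻¹) (Set.Ioi 0) ∧
    ∫ r in Set.Ioi (0:ℝ), r ^ 2 * ((r + a) ^ 4)⁻¹ = 1 / (3 * a) := by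
  set g : ℝ → ℝ := fun r => -(r + a)⁻¹ + a * ((r + a) ^ 2)⁻¹ - a ^ 2 / 3 * ((r + a) ^ 3)⁻¹ with hg
  have hderiv : ∀ r ∈ Set.Ici (0:ℝ), HasDerivAt g (r ^ 2 * ((r + a) ^ 4)⁻¹) r := by
    intro r hr
    have hra : 0 < r + a := by simp only [Set.mem_Ici] at hr; linarith
    have hu : HasDerivAt (fun r : ℝ => r + a) 1 r := (hasDerivAt_id r).add_const a
    have h1 := (hu.fun_inv hra.ne').fun_neg
    have h2 := ((hu.fun_pow 2).fun_inv (pow_pos hra 2).ne').const_mul a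
    have h3 := ((hu.fun_pow 3).fun_inv (pow_pos hra 3).ne').const_mul (a ^ 2 / 3)
    have := (h1.fun_add h2).fun_sub h3
    refine this.congr_deriv ?_
    field_simp
    ring
  have hpos : ∀ r ∈ Set.Ioi (0:ℝ), 0 ≤ r ^ 2 * ((r + a) ^ 4)⁻¹ := by
    intro r hr
    have : 0 < r + a := by simp only [Set.mem_Ioi] at hr; linarith
    positivity
  have hlim : Tendsto g atTop (𝓝 0) := by
    have h1 : Tendsto (fun r : ℝ => r + a) atTop atTop :=
      tendsto_atTop_add_const_right _ a tendsto_id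
    have h2 : Tendsto (fun r : ℝ => (r + a)⁻¹) atTop (𝓝 0) :=
      tendsto_inv_atTop_zero.comp h1
    have h2' : Tendsto (fun r : ℝ => ((r + a) ^ 2)⁻¹) atTop (𝓝 0) := by
      simpa [inv_pow] using h2.pow 2
    have h3' : Tendsto (fun r : ℝ => ((r + a) ^ 3)⁻¹) atTop (𝓝 0) := by
      simpa [inv_pow] using h2.pow 3
    have := (h2.neg.add (h2'.const_mul a)).sub (h3'.const_mul (a ^ 2 / 3))
    simpa using this
  refine ⟨integrableOn_Ioi_deriv_of_nonneg' hderiv hpos hlim, ?_⟩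
  rw [integral_Ioi_of_hasDerivAt_of_nonneg' hderiv hpos hlim, hg]
  simp only
  field_simp
  ring

lemma inner_bound (x : E3) (hx : 0 < ‖x‖) (a b : ℝ) (ha : 0 < a) (ha1 : a ≤ 1) (hb : 0 < b) :
    (∫ y : E3, ((‖x - y‖ + a) ^ 4)⁻¹ * ((‖y‖ + b) ^ 3)⁻¹)
      ≤ 24 * (volume (Metric.ball (0:E3) 1)).toReal * (‖x‖ ^ 3)⁻¹ * (b⁻¹ + a⁻¹) := by
  set V := (volume (Metric.ball (0:E3) 1)).toReal with hV
  have hV0 : 0 ≤ V := ENNReal.toReal_nonneg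
  set R := ‖x‖ with hR
  set ρ := R / 2 with hρ
  have hρ0 : 0 < ρ := by positivity
  set g1 : E3 → ℝ := fun y =>
    ((ρ ^ 4)⁻¹ * b⁻¹) * Set.indicator (Metric.ball (0:E3) ρ) (fun y => ((‖y‖ + b) ^ 2)⁻¹) y
    with hg1
  set g2 : E3 → ℝ := fun y => (ρ ^ 3)⁻¹ * ((‖x - y‖ + a) ^ 4)⁻¹ with hg2
  -- integrability of the indicator part
  have hcont1 : Continuous (fun y : E3 => ((‖y‖ + b) ^ 2)⁻¹) :=
    ((continuous_norm.add continuous_const).pow 2).inv₀ (fun y => (pow_pos (add_pos_of_nonneg_of_pos (norm_nonneg y) hb) 2).ne')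
  have hIOn : IntegrableOn (fun y : E3 => ((‖y‖ + b) ^ 2)⁻¹) (Metric.ball 0 ρ) := by
    apply Measure.integrableOn_of_bounded (M := (b ^ 2)⁻¹) measure_ball_lt_top.ne
      hcont1.aestronglyMeasurable
    filter_upwards with y
    rw [Real.norm_eq_abs, abs_of_nonneg (by positivity)]
    gcongr <;> first | positivity | nlinarith [norm_nonneg y]
  have hind : Integrable
      (Set.indicator (Metric.ball (0:E3) ρ) (fun y => ((‖y‖ + b) ^ 2)⁻¹)) :=
    (integrable_indicator_iff measurableSet_ball).2 hIOn
  have hint1 : Integrable g1 := hind.const_mul _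
  -- integrability of g2
  have hcont2 : Continuous (fun z : E3 => ((‖z‖ + a) ^ 4)⁻¹) :=
    ((continuous_norm.add continuous_const).pow 4).inv₀ (fun z => (pow_pos (add_pos_of_nonneg_of_pos (norm_nonneg z) ha) 4).ne')
  have hint2' : Integrable (fun z : E3 => ((‖z‖ + a) ^ 4)⁻¹) := by
    have hbase : Integrable (fun z : E3 => (a ^ 4)⁻¹ * (1 + ‖z‖) ^ (-(4:ℝ))) :=
      (integrable_one_add_norm (E := E3) (r := 4) (by rw [finrank_E3]; norm_num)).const_mul _
    refine hbase.mono' hcont2.aestronglyMeasurable ?_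
    filter_upwards with z
    rw [Real.norm_eq_abs, abs_of_nonneg (by positivity)]
    have h4 : (1 + ‖z‖) ^ (-(4:ℝ)) = ((1 + ‖z‖) ^ (4:ℕ))⁻¹ := by
      rw [Real.rpow_neg (by positivity), show ((4:ℝ)) = ((4:ℕ):ℝ) by norm_num,
        Real.rpow_natCast]
    rw [h4, ← mul_inv, ← mul_pow]
    gcongr <;> first | positivity | nlinarith [norm_nonneg z]
  have hint2 : Integrable (fun y : E3 => ((‖x - y‖ + a) ^ 4)⁻¹) := hint2'.comp_sub_left x
  have hint2full : Integrable g2 := hint2.const_mul _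
  -- pointwise bound
  have hpt : ∀ y : E3, ((‖x - y‖ + a) ^ 4)⁻¹ * ((‖y‖ + b) ^ 3)⁻¹ ≤ g1 y + g2 y := by
    intro y
    by_cases hy : y ∈ Metric.ball (0:E3) ρ
    · have hy' : ‖y‖ < ρ := mem_ball_zero_iff.1 hy
      have hxy : ρ ≤ ‖x - y‖ := by
        have h := norm_sub_norm_le x y
        rw [hρ] at *
        linarith
      have hA : ((‖x - y‖ + a) ^ 4)⁻¹ ≤ (ρ ^ 4)⁻¹ := by
        gcongr <;> first | positivity | linarith
      have hB : ((‖y‖ + b) ^ 3)⁻¹ ≤ b⁻¹ * ((‖y‖ + b) ^ 2)⁻¹ := by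
        rw [← mul_inv]
        gcongr <;> first | positivity | nlinarith [norm_nonneg y]
      have := mul_le_mul hA hB (by positivity) (by positivity)
      calc ((‖x - y‖ + a) ^ 4)⁻¹ * ((‖y‖ + b) ^ 3)⁻¹
          ≤ (ρ ^ 4)⁻¹ * (b⁻¹ * ((‖y‖ + b) ^ 2)⁻¹) := this
        _ = g1 y := by rw [hg1]; simp only; rw [Set.indicator_of_mem hy]; ring
        _ ≤ g1 y + g2 y := le_add_of_nonneg_right (by positivity)
    · have hy' : ρ ≤ ‖y‖ := by
        simpa [mem_ball_zero_iff, not_lt] using hy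
      have hB : ((‖y‖ + b) ^ 3)⁻¹ ≤ (ρ ^ 3)⁻¹ := by
        gcongr <;> first | positivity | linarith
      have h0 : g1 y = 0 := by
        rw [hg1]; simp only; rw [Set.indicator_of_notMem hy]; ring
      calc ((‖x - y‖ + a) ^ 4)⁻¹ * ((‖y‖ + b) ^ 3)⁻¹
          ≤ ((‖x - y‖ + a) ^ 4)⁻¹ * (ρ ^ 3)⁻¹ := by gcongr
        _ = g2 y := by rw [hg2]; ring
        _ = g1 y + g2 y := by rw [h0]; ring
  -- integral of g1
  have hI1 : (∫ y : E3, g1 y) ≤ 24 * V * (R ^ 3)⁻¹ * b⁻¹ := by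
    simp only [hg1]
    rw [integral_const_mul]
    have heq : (Set.indicator (Metric.ball (0:E3) ρ) (fun y => ((‖y‖ + b) ^ 2)⁻¹)) =
        fun y : E3 => Set.indicator (Set.Iio ρ) (fun r => ((r + b) ^ 2)⁻¹) ‖y‖ := by
      funext y
      by_cases h : ‖y‖ < ρ
      · rw [Set.indicator_of_mem (mem_ball_zero_iff.2 h),
          Set.indicator_of_mem (Set.mem_Iio.2 h)]
      · rw [Set.indicator_of_notMem (fun hc => h (mem_ball_zero_iff.1 hc)),
          Set.indicator_of_notMem (fun hc => h (Set.mem_Iio.1 hc))]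
    rw [heq, radialE3]
    have hle : (∫ r in Set.Ioi (0:ℝ), r ^ 2 * Set.indicator (Set.Iio ρ) (fun r => ((r + b) ^ 2)⁻¹) r)
        ≤ ρ := by
      have hmaj : Integrable (fun r : ℝ => Set.indicator (Set.Iio ρ) (fun _ => (1:ℝ)) r)
          (volume.restrict (Set.Ioi 0)) := by
        rw [integrable_indicator_iff measurableSet_Iio]
        refine integrableOn_const ?_
        rw [Measure.restrict_apply measurableSet_Iio, Set.Iio_inter_Ioi]
        exact measure_Ioo_lt_top.ne
      have hmono : (∫ r in Set.Ioi (0:ℝ), r ^ 2 * Set.indicator (Set.Iio ρ) (fun r => ((r + b) ^ 2)⁻¹) r)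
          ≤ ∫ r in Set.Ioi (0:ℝ), Set.indicator (Set.Iio ρ) (fun _ => (1:ℝ)) r := by
        apply integral_mono_of_nonneg
        · filter_upwards with r
          by_cases h : r ∈ Set.Iio ρ
          · simp only [Set.indicator_of_mem h]; positivity
          · simp [Set.indicator_of_notMem h]
        · exact hmaj
        · filter_upwards [ae_restrict_mem measurableSet_Ioi] with r hr
          by_cases h : r ∈ Set.Iio ρ
          · simp only [Set.indicator_of_mem h]
            have hr0 : (0:ℝ) < r := hr
            have h1 : r ^ 2 * ((r + b) ^ 2)⁻¹ ≤ (r + b) ^ 2 * ((r + b) ^ 2)⁻¹ := by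
              gcongr
              nlinarith
            rw [mul_inv_cancel₀ (by positivity)] at h1
            exact h1
          · simp [Set.indicator_of_notMem h]
        done
      have hval : (∫ r in Set.Ioi (0:ℝ), Set.indicator (Set.Iio ρ) (fun _ => (1:ℝ)) r) = ρ := by
        rw [integral_indicator measurableSet_Iio]
        rw [Measure.restrict_restrict measurableSet_Iio, setIntegral_const]
        rw [Set.Iio_inter_Ioi, Real.volume_real_Ioo]
        simp [ENNReal.toReal_ofReal hρ0.le, hρ0.le]
      linarith [hmono, hval.le, hval.ge]
    calc (ρ ^ 4)⁻¹ * b⁻¹ * (3 * V * ∫ r in Set.Ioi (0:ℝ),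
            r ^ 2 * Set.indicator (Set.Iio ρ) (fun r => ((r + b) ^ 2)⁻¹) r)
        ≤ (ρ ^ 4)⁻¹ * b⁻¹ * (3 * V * ρ) := by gcongr
      _ = 24 * V * (R ^ 3)⁻¹ * b⁻¹ := by
          rw [hρ]; field_simp; ring
  -- integral of g2
  have hI2 : (∫ y : E3, g2 y) ≤ 24 * V * (R ^ 3)⁻¹ * a⁻¹ := by
    simp only [hg2]
    rw [integral_const_mul]
    have htrans : (∫ y : E3, ((‖x - y‖ + a) ^ 4)⁻¹) = ∫ z : E3, ((‖z‖ + a) ^ 4)⁻¹ :=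
      integral_sub_left_eq_self (fun z : E3 => ((‖z‖ + a) ^ 4)⁻¹) volume x
    rw [htrans]
    rw [radialE3 (fun r => ((r + a) ^ 4)⁻¹), (oneD a ha).2]
    have h3a : (3:ℝ) * V * (1 / (3 * a)) = V * a⁻¹ := by
      rw [one_div, mul_inv]; ring
    have h8 : ((R / 2) ^ 3)⁻¹ = 8 * (R ^ 3)⁻¹ := by
      rw [div_pow, inv_div]
      rw [div_eq_mul_inv]
      norm_num [mul_comm]
    rw [hρ, h3a, h8]
    have hnn : (0:ℝ) ≤ V * (R ^ 3)⁻¹ * a⁻¹ := by positivity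
    nlinarith [hnn]
  -- combine
  have hmono := integral_mono_of_nonneg
    (f := fun y : E3 => ((‖x - y‖ + a) ^ 4)⁻¹ * ((‖y‖ + b) ^ 3)⁻¹)
    (g := fun y => g1 y + g2 y)
    (Filter.Eventually.of_forall fun y => by positivity)
    (hint1.add hint2full)
    (Filter.Eventually.of_forall hpt)
  rw [integral_add hint1 hint2full] at hmono
  calc (∫ y : E3, ((‖x - y‖ + a) ^ 4)⁻¹ * ((‖y‖ + b) ^ 3)⁻¹)
      ≤ (∫ y, g1 y) + ∫ y, g2 y := hmono
    _ ≤ 24 * V * (R ^ 3)⁻¹ * b⁻¹ + 24 * V * (R ^ 3)⁻¹ * a⁻¹ := add_le_add hI1 hI2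
    _ = 24 * V * (R ^ 3)⁻¹ * (b⁻¹ + a⁻¹) := by ring

lemma sqrt_inv_eq (s : ℝ) (hs : 0 ≤ s) : (Real.sqrt s)⁻¹ = s ^ (-(1/2):ℝ) := by
  rw [Real.sqrt_eq_rpow, Real.rpow_neg hs]

lemma sqrtinv_intervalIntegrable :
    IntervalIntegrable (fun s : ℝ => (Real.sqrt s)⁻¹) volume 0 1 := by
  have hr1 : IntervalIntegrable (fun s : ℝ => s ^ (-(1/2):ℝ)) volume 0 1 :=
    intervalIntegral.intervalIntegrable_rpow' (by norm_num)
  rw [intervalIntegrable_iff_integrableOn_Ioc_of_le zero_le_one] at hr1 ⊢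
  apply hr1.congr
  filter_upwards [ae_restrict_mem measurableSet_Ioc] with s hs
  exact (sqrt_inv_eq s hs.1.le).symm

lemma sqrtinv_integral : ∫ s in (0:ℝ)..1, (Real.sqrt s)⁻¹ = 2 := by
  rw [intervalIntegral.integral_congr (g := fun s : ℝ => s ^ (-(1/2):ℝ)) ?_]
  · rw [integral_rpow (Or.inl (by norm_num))]
    norm_num
  · intro s hs
    rw [Set.uIcc_of_le zero_le_one] at hs
    exact sqrt_inv_eq s hs.1

theorem stmt13 :
    ∃ C : ℝ, 0 < C ∧ ∀ x : E3, 8 < ‖x‖ →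
      (∫ s in Set.Ioo (0:ℝ) 1, ∫ y : E3,
          ((‖x - y‖ + Real.sqrt (1 - s)) ^ 4)⁻¹ * ((‖y‖ + Real.sqrt s) ^ 3)⁻¹)
        ≤ C * ‖x‖ ^ (-(3:ℝ)) := by
  set V := (volume (Metric.ball (0:E3) 1)).toReal with hV
  have hV0 : 0 < V :=
    ENNReal.toReal_pos (Metric.measure_ball_pos volume 0 one_pos).ne' measure_ball_lt_top.ne
  refine ⟨96 * V, mul_pos (by norm_num) hV0, ?_⟩
  intro x hx
  have hR : (0:ℝ) < ‖x‖ := by linarith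
  set Φ : ℝ → ℝ :=
    fun s => 24 * V * (‖x‖ ^ 3)⁻¹ * ((Real.sqrt s)⁻¹ + (Real.sqrt (1 - s))⁻¹) with hΦ
  have hii1 := sqrtinv_intervalIntegrable
  have hii2 : IntervalIntegrable (fun s : ℝ => (Real.sqrt (1 - s))⁻¹) volume 0 1 := by
    have h := hii1.comp_sub_left 1
    norm_num at h
    exact h.symm
  have hΦint : IntegrableOn Φ (Set.Ioo 0 1) := by
    have h := (hii1.add hii2).const_mul (24 * V * (‖x‖ ^ 3)⁻¹)
    rw [intervalIntegrable_iff_integrableOn_Ioc_of_le zero_le_one] at h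
    exact h.mono_set Set.Ioo_subset_Ioc_self
  have houter : (∫ s in Set.Ioo (0:ℝ) 1, ∫ y : E3,
      ((‖x - y‖ + Real.sqrt (1 - s)) ^ 4)⁻¹ * ((‖y‖ + Real.sqrt s) ^ 3)⁻¹)
      ≤ ∫ s in Set.Ioo (0:ℝ) 1, Φ s := by
    apply integral_mono_of_nonneg
    · filter_upwards with s
      exact integral_nonneg fun y => by positivity
    · exact hΦint
    · filter_upwards [ae_restrict_mem measurableSet_Ioo] with s hs
      have h1s : 0 < 1 - s := by linarith [hs.2]
      have h := inner_bound x hR (Real.sqrt (1 - s)) (Real.sqrt s)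
        (Real.sqrt_pos.2 h1s) (Real.sqrt_le_one.2 (by linarith [hs.1])) (Real.sqrt_pos.2 hs.1)
      simpa only [hΦ, hV] using h
  have hcomp : ∫ s in (0:ℝ)..1, (Real.sqrt (1 - s))⁻¹ = 2 := by
    have h2 := intervalIntegral.integral_comp_sub_left (a := 0) (b := 1)
      (fun s : ℝ => (Real.sqrt s)⁻¹) 1
    norm_num at h2
    rw [h2, sqrtinv_integral]
  have hval : (∫ s in Set.Ioo (0:ℝ) 1, Φ s) = 96 * V * (‖x‖ ^ 3)⁻¹ := by
    rw [← MeasureTheory.integral_Ioc_eq_integral_Ioo,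
      ← intervalIntegral.integral_of_le zero_le_one]
    simp only [hΦ]
    rw [intervalIntegral.integral_const_mul, intervalIntegral.integral_add hii1 hii2,
      sqrtinv_integral, hcomp]
    ring
  have hrpow : ‖x‖ ^ (-(3:ℝ)) = (‖x‖ ^ 3)⁻¹ := by
    rw [Real.rpow_neg hR.le, show ((3:ℝ)) = ((3:ℕ):ℝ) by norm_num, Real.rpow_natCast]
  rw [hrpow]
  calc _ ≤ ∫ s in Set.Ioo (0:ℝ) 1, Φ s := houter
    _ = 96 * V * (‖x‖ ^ 3)⁻¹ := hval

end StmtAux
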